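/- arXiv:2501.06854 — 2 statements merged into one kernel-verified Lean document; each statement's English description precedes it below -/
import Mathlib

section
/- Let A be an n×n positive semidefinite real symmetric matrix with Tr(A) > 0 and eigenvalues λ₁ ≥ λ₂ ≥ … ≥ λₙ (listed with multiplicity). Set k = max(1, ⌊Tr(A)/(2λ₁)⌋). Then λ_k ≥ Tr(A)/(2n). -/
noncomputable section

lemma sum_eig_eq_trace {n : ℕ} (A : Matrix (Fin n) (Fin n) ℝ) (hA : A.IsHermitian) :
    ∑ i, hA.eigenvalues i = A.trace := by
  rw [hA.trace_eq_sum_eigenvalues]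
  simp

/-- Let `A` be an `n × n` positive semidefinite real symmetric matrix with
`Tr(A) > 0`, and let `lam : Fin n → ℝ` enumerate its eigenvalues with multiplicity
in decreasing order `λ₁ ≥ … ≥ λₙ` (so `lam ⟨0,_⟩ = λ₁`). With
`k = max(1, ⌊Tr(A) / (2 λ₁)⌋)`, one has `k - 1 < n` and `λ_k ≥ Tr(A) / (2n)`. -/
theorem eigenvalue_lower_bound {n : ℕ} (hn : 0 < n)
    (A : Matrix (Fin n) (Fin n) ℝ) (hA : A.PosSemidef) (htr : 0 < A.trace)
    (lam : Fin n → ℝ) (hdecr : Antitone lam)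
    (henum : ∃ σ : Equiv.Perm (Fin n), ∀ i, lam i = hA.1.eigenvalues (σ i)) :
    ∃ hk : max 1 (Nat.floor (A.trace / (2 * lam ⟨0, hn⟩))) - 1 < n,
      A.trace / (2 * n) ≤ lam ⟨max 1 (Nat.floor (A.trace / (2 * lam ⟨0, hn⟩))) - 1, hk⟩ := by
  obtain ⟨σ, hσ⟩ := henum
  have hn' : (0 : ℝ) < n := by exact_mod_cast hn
  have hnonneg : ∀ i, 0 ≤ lam i := fun i => hσ i ▸ hA.eigenvalues_nonneg (σ i)
  have hsum : ∑ i, lam i = A.trace := by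
    rw [Finset.sum_congr rfl (fun i _ => hσ i), ← sum_eig_eq_trace A hA.1]
    exact Equiv.sum_comp σ _
  set T := A.trace with hT
  set l0 := lam ⟨0, hn⟩ with hl0
  have hmax : ∀ i, lam i ≤ l0 := fun i => hdecr (by simp [Fin.le_def])
  have hTn : T ≤ n * l0 := by
    calc T = ∑ i, lam i := hsum.symm
    _ ≤ ∑ _i : Fin n, l0 := Finset.sum_le_sum (fun i _ => hmax i)
    _ = n * l0 := by simp [mul_comm]
  have hl0pos : 0 < l0 := by nlinarith
  set x := T / (2 * l0) with hx
  have hxpos : 0 < x := by positivity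
  have hxn : x ≤ (n : ℝ) := by
    rw [hx, div_le_iff₀ (by positivity)]
    nlinarith
  have hfln : Nat.floor x ≤ n := by
    have := Nat.floor_mono hxn
    rwa [Nat.floor_natCast] at this
  set k := max 1 (Nat.floor x) with hkdef
  set m := k - 1 with hm
  have hk : m < n := by omega
  refine ⟨hk, ?_⟩
  set j : Fin n := ⟨m, hk⟩ with hj
  -- ((m : ℕ) : ℝ) ≤ x
  have hmx : (m : ℝ) ≤ x := by
    have h1 : m ≤ Nat.floor x := by omega
    calc (m : ℝ) ≤ (Nat.floor x : ℝ) := by exact_mod_cast h1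
    _ ≤ x := Nat.floor_le hxpos.le
  have hml0 : (m : ℝ) * l0 ≤ T / 2 := by
    have := mul_le_mul_of_nonneg_right hmx hl0pos.le
    rw [hx] at this
    calc (m : ℝ) * l0 ≤ T / (2 * l0) * l0 := this
    _ = T / 2 := by field_simp
  -- sum over Iio j is small
  have hIio : ∑ i ∈ Finset.Iio j, lam i ≤ (m : ℝ) * l0 := by
    calc ∑ i ∈ Finset.Iio j, lam i ≤ ∑ _i ∈ Finset.Iio j, l0 :=
        Finset.sum_le_sum (fun i _ => hmax i)
    _ = (m : ℝ) * l0 := by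
        rw [Finset.sum_const, Fin.card_Iio, nsmul_eq_mul]
  have hsplit : ∑ i ∈ Finset.Iio j, lam i + ∑ i ∈ Finset.Ici j, lam i = T := by
    rw [← hsum, ← Finset.sum_union]
    · congr 1
      ext i
      simp [lt_or_ge i j]
    · simp [Finset.disjoint_left]
  have hIci : T / 2 ≤ ∑ i ∈ Finset.Ici j, lam i := by
    nlinarith [hIio, hsplit, hml0]
  have hIci2 : ∑ i ∈ Finset.Ici j, lam i ≤ (n : ℝ) * lam j := by
    calc ∑ i ∈ Finset.Ici j, lam i ≤ ∑ _i ∈ Finset.Ici j, lam j :=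
        Finset.sum_le_sum (fun i hi => hdecr (Finset.mem_Ici.mp hi))
    _ = ((Finset.Ici j).card : ℝ) * lam j := by rw [Finset.sum_const, nsmul_eq_mul]
    _ ≤ (n : ℝ) * lam j := by
        apply mul_le_mul_of_nonneg_right _ (hnonneg j)
        exact_mod_cast Finset.card_le_univ _ |>.trans (by simp)
  rw [div_le_iff₀ (by positivity), mul_comm]
  nlinarith

end
end

section
/- Let c₀ > 0 be a universal constant such that for every n ≥ 1, every isotropic log-concave random vector X in ℝⁿ, every 0 < ε < c₀, and every y ∈ ℝⁿ, ℙ(‖X − y‖₂² ≤ ε·n) ≤ ε^{c₀·n}. Then for all constants C₂, c₂ > 0, setting c₃ = min(c₀, c₂^{1/c₀}): for every n ≥ 1 and every convex body K ⊂ ℝⁿ in convex isotropic position satisfying Vol(K ∩ √(C₂·n)·B₂ⁿ) > c₂ⁿ, one has L_K² < C₂/c₃. -/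
open MeasureTheory ProbabilityTheory

open Pointwise

noncomputable section

/-- A nonnegative function is log-concave if it satisfies
`f(t x + (1-t) y) ≥ f(x)^t f(y)^(1-t)`; this is equivalent to `f = e^{-V}`
for some convex function `V : ℝⁿ → ℝ ∪ {+∞}`. -/
def IsLogConcaveFun {E : Type*} [AddCommGroup E] [Module ℝ E] (f : E → ℝ) : Prop :=
  (∀ x, 0 ≤ f x) ∧
  ∀ x y : E, ∀ t : ℝ, 0 ≤ t → t ≤ 1 →
    f x ^ t * f y ^ (1 - t) ≤ f (t • x + (1 - t) • y)

/-- A measure on `ℝⁿ` is log-concave (with density) if it has a log-concave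
density with respect to the Lebesgue measure. -/
def IsLogConcaveMeasure {n : ℕ} (μ : Measure (EuclideanSpace ℝ (Fin n))) : Prop :=
  ∃ f : EuclideanSpace ℝ (Fin n) → ℝ, IsLogConcaveFun f ∧
    μ = volume.withDensity fun x => ENNReal.ofReal (f x)

/-- A measure on `ℝⁿ` is isotropic if it has mean `0` and covariance matrix `Iₙ`. -/
def IsIsotropicMeasure {n : ℕ} (μ : Measure (EuclideanSpace ℝ (Fin n))) : Prop :=
  (∀ i, ∫ x, x i ∂μ = 0) ∧
  (∀ i j, ∫ x, x i * x j ∂μ = if i = j then 1 else 0)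


/-- A convex body in `ℝⁿ`: a compact convex set with nonempty interior. -/
def IsConvexBody {n : ℕ} (K : Set (EuclideanSpace ℝ (Fin n))) : Prop :=
  IsCompact K ∧ Convex ℝ K ∧ (interior K).Nonempty

/-- A convex body `K ⊂ ℝⁿ` is in convex isotropic position with constant `L = L_K > 0`
if `Vol(K) = 1`, `∫_K x dx = 0` and `∫_K x xᵀ dx = L_K² Iₙ`. -/
def IsConvexIsotropic {n : ℕ} (K : Set (EuclideanSpace ℝ (Fin n))) (L : ℝ) : Prop :=
  IsConvexBody K ∧ volume K = 1 ∧ 0 < L ∧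
  (∀ i, ∫ x in K, x i = 0) ∧
  (∀ i j, ∫ x in K, x i * x j = if i = j then L ^ 2 else 0)

set_option maxHeartbeats 2000000 in
/-- Suppose `c₀ > 0` is such that the small-ball estimate
`ℙ(‖X - y‖₂² ≤ ε n) ≤ ε^{c₀ n}` holds for every `n ≥ 1`, every isotropic log-concave
random vector `X` in `ℝⁿ` (identified with its law), every `0 < ε < c₀` and every
`y ∈ ℝⁿ`. Then for all `C₂, c₂ > 0`, setting `c₃ = min(c₀, c₂^{1/c₀})`: every convex
body `K ⊂ ℝⁿ` (`n ≥ 1`) in convex isotropic position with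
`Vol(K ∩ √(C₂ n) B₂ⁿ) > c₂ⁿ` satisfies `L_K² < C₂ / c₃`. -/
theorem isotropic_constant_lt_of_M_position (c₀ : ℝ) (hc₀ : 0 < c₀)
    (hsb : ∀ n : ℕ, 1 ≤ n →
      ∀ μ : Measure (EuclideanSpace ℝ (Fin n)), IsProbabilityMeasure μ →
        IsLogConcaveMeasure μ → IsIsotropicMeasure μ →
        ∀ ε : ℝ, 0 < ε → ε < c₀ →
        ∀ y : EuclideanSpace ℝ (Fin n),
          μ {x | ‖x - y‖ ^ 2 ≤ ε * n} ≤ ENNReal.ofReal (ε ^ (c₀ * (n : ℝ)))) :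
    ∀ C₂ c₂ : ℝ, 0 < C₂ → 0 < c₂ →
      ∀ n : ℕ, 1 ≤ n → ∀ (K : Set (EuclideanSpace ℝ (Fin n))) (L : ℝ),
        IsConvexIsotropic K L →
        ENNReal.ofReal (c₂ ^ n) < volume (K ∩ Metric.closedBall 0 (Real.sqrt (C₂ * n))) →
        L ^ 2 < C₂ / min c₀ (c₂ ^ (1 / c₀)) := by
  intro C₂ c₂ hC₂ hc₂ n hn K L hK hvol
  by_contra hcon
  push_neg at hcon
  obtain ⟨⟨hKcomp, hKconv, -⟩, hKvol, hL, hmean, hcov⟩ := hK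
  have hn0 : (0:ℝ) < n := by exact_mod_cast Nat.lt_of_lt_of_le Nat.zero_lt_one hn
  set c₃ := min c₀ (c₂ ^ (1 / c₀)) with hc₃def
  have hc₂pow : (0:ℝ) < c₂ ^ (1/c₀) := Real.rpow_pos_of_pos hc₂ _
  have hc₃ : 0 < c₃ := lt_min hc₀ hc₂pow
  have hL2 : (0:ℝ) < L ^ 2 := by positivity
  set ε := C₂ / L ^ 2 with hεdef
  have hε : 0 < ε := div_pos hC₂ hL2
  have hεc₃ : ε ≤ c₃ := by
    rw [hεdef, div_le_iff₀ hL2]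
    calc C₂ = (C₂ / c₃) * c₃ := by field_simp
    _ ≤ L ^ 2 * c₃ := mul_le_mul_of_nonneg_right hcon hc₃.le
    _ = c₃ * L ^ 2 := mul_comm _ _
  have hεc₀ : ε ≤ c₀ := hεc₃.trans (min_le_left _ _)
  have hεc₂ : ε ≤ c₂ ^ (1/c₀) := hεc₃.trans (min_le_right _ _)
  have hLne : L ≠ 0 := ne_of_gt hL
  have hεL2 : ε * L ^ 2 = C₂ := by
    rw [hεdef]; field_simp
  -- the contraction map
  set T : EuclideanSpace ℝ (Fin n) → EuclideanSpace ℝ (Fin n) := fun x => L⁻¹ • x with hTdef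
  have hTmeas : Measurable T := (continuous_const_smul _).measurable
  have hKmeas : MeasurableSet K := hKcomp.isClosed.measurableSet
  set S : Set (EuclideanSpace ℝ (Fin n)) := L⁻¹ • K with hSdef
  have hScomp : IsCompact S := hKcomp.smul _
  have hSmeas : MeasurableSet S := hScomp.isClosed.measurableSet
  set μ : Measure (EuclideanSpace ℝ (Fin n)) := Measure.map T (volume.restrict K) with hμdef
  have hμapp : ∀ A : Set (EuclideanSpace ℝ (Fin n)), MeasurableSet A →
      μ A = volume (K ∩ T ⁻¹' A) := by
    intro A hA
    rw [hμdef, Measure.map_apply hTmeas hA, Measure.restrict_apply (hTmeas hA),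
      Set.inter_comm]
  -- probability measure
  have hprob : IsProbabilityMeasure μ := by
    constructor
    rw [hμapp _ MeasurableSet.univ]
    simpa using hKvol
  -- the density
  set f : EuclideanSpace ℝ (Fin n) → ℝ := S.indicator (fun _ => L ^ n) with hfdef
  have hLn : (0:ℝ) < L ^ n := by positivity
  -- μ as a scalar multiple of restricted volume
  have hfinrank : Module.finrank ℝ (EuclideanSpace ℝ (Fin n)) = n :=
    finrank_euclideanSpace_fin
  have hμsmul : μ = ENNReal.ofReal (L ^ n) • volume.restrict S := by
    refine Measure.ext fun A hA => ?_
    rw [hμapp _ hA, Measure.smul_apply, Measure.restrict_apply hA, smul_eq_mul]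
    have hset : K ∩ T ⁻¹' A = L • (A ∩ S) := by
      ext x
      rw [Set.mem_smul_set_iff_inv_smul_mem₀ hLne]
      constructor
      · rintro ⟨hxK, hxA⟩
        exact ⟨hxA, Set.smul_mem_smul_set hxK⟩
      · rintro ⟨hxA, hxS⟩
        refine ⟨?_, hxA⟩
        rw [hSdef, Set.smul_mem_smul_set_iff₀ (inv_ne_zero hLne)] at hxS
        exact hxS
    rw [hset, Measure.addHaar_smul, hfinrank, abs_of_pos hLn]
  -- withDensity representation
  have hμw : μ = volume.withDensity fun x => ENNReal.ofReal (f x) := by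
    have hfe : (fun x => ENNReal.ofReal (f x)) =
        S.indicator (fun _ => ENNReal.ofReal (L ^ n)) := by
      funext x
      by_cases hx : x ∈ S <;> simp [hfdef, hx]
    rw [hfe, withDensity_indicator hSmeas, withDensity_const, hμsmul]
  -- log-concavity
  have hSconv : Convex ℝ S := hKconv.smul _
  have hfnonneg : ∀ x, 0 ≤ f x := by
    intro x
    by_cases hx : x ∈ S <;> simp [hfdef, hx, hLn.le]
  have hLC : IsLogConcaveMeasure μ := by
    refine ⟨f, ⟨hfnonneg, ?_⟩, hμw⟩
    intro x y t ht0 ht1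
    rcases eq_or_lt_of_le ht0 with h0 | h0
    · rw [← h0]
      norm_num
    rcases eq_or_lt_of_le ht1 with h1 | h1
    · rw [h1]
      norm_num
    by_cases hx : x ∈ S
    · by_cases hy : y ∈ S
      · have hxy : t • x + (1-t) • y ∈ S := hSconv hx hy ht0 (by linarith) (by ring)
        rw [hfdef]
        simp only [Set.indicator_of_mem hx, Set.indicator_of_mem hy,
          Set.indicator_of_mem hxy]
        rw [← Real.rpow_add hLn]
        norm_num
      · have hy0 : f y = 0 := Set.indicator_of_notMem hy _
        rw [hy0, Real.zero_rpow (by linarith : 1 - t ≠ 0), mul_zero]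
        exact hfnonneg _
    · have hx0 : f x = 0 := Set.indicator_of_notMem hx _
      rw [hx0, Real.zero_rpow (ne_of_gt h0), zero_mul]
      exact hfnonneg _
  -- isotropy
  have hInt : ∀ g : EuclideanSpace ℝ (Fin n) → ℝ, Continuous g →
      ∫ x, g x ∂μ = ∫ x in K, g (L⁻¹ • x) := by
    intro g hg
    rw [hμdef, integral_map hTmeas.aemeasurable hg.aestronglyMeasurable]
  have hiso : IsIsotropicMeasure μ := by
    constructor
    · intro i
      rw [hInt (fun x => x i) (by exact (EuclideanSpace.proj i).continuous)]
      have : ∀ x : EuclideanSpace ℝ (Fin n), (L⁻¹ • x) i = L⁻¹ * x i := by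
        intro x; simp [PiLp.smul_apply, smul_eq_mul]
      simp only [this]
      rw [integral_const_mul, hmean i, mul_zero]
    · intro i j
      have hc : Continuous fun x : EuclideanSpace ℝ (Fin n) => x i * x j :=
        ((EuclideanSpace.proj i).continuous).mul ((EuclideanSpace.proj j).continuous)
      rw [hInt (fun x => x i * x j) hc]
      have : ∀ x : EuclideanSpace ℝ (Fin n),
          (L⁻¹ • x) i * (L⁻¹ • x) j = (L⁻¹ * L⁻¹) * (x i * x j) := by
        intro x; simp [PiLp.smul_apply, smul_eq_mul]; ring
      simp only [this]
      rw [integral_const_mul, hcov i j]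
      by_cases hij : i = j
      · simp only [hij, if_pos rfl]
        field_simp
        simp
      · simp [hij]
  -- the event equals the intersection with the ball
  have hev : μ {x : EuclideanSpace ℝ (Fin n) | ‖x - 0‖ ^ 2 ≤ ε * n} =
      volume (K ∩ Metric.closedBall 0 (Real.sqrt (C₂ * n))) := by
    have hEmeas : MeasurableSet {x : EuclideanSpace ℝ (Fin n) | ‖x - 0‖ ^ 2 ≤ ε * n} := by
      refine (IsClosed.measurableSet ?_)
      exact isClosed_le (by fun_prop) continuous_const
    rw [hμapp _ hEmeas]
    congr 1
    ext x
    simp only [Set.mem_inter_iff, Set.mem_preimage, Set.mem_setOf_eq, sub_zero,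
      Metric.mem_closedBall, dist_zero_right]
    refine and_congr_right fun _ => ?_
    rw [norm_smul, Real.norm_eq_abs, abs_of_pos (inv_pos.mpr hL),
      Real.le_sqrt (norm_nonneg x) (by positivity)]
    rw [mul_pow, ← hεL2]
    constructor
    · intro h
      have := mul_le_mul_of_nonneg_right h (le_of_lt hL2)
      calc ‖x‖ ^ 2 = L⁻¹ ^ 2 * ‖x‖ ^ 2 * L ^ 2 := by field_simp
      _ ≤ ε * n * L ^ 2 := this
      _ = ε * L ^ 2 * n := by ring
    · intro h
      have h' : L⁻¹ ^ 2 * ‖x‖^2 ≤ L⁻¹^2 * (ε * L^2 * ↑n) :=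
        mul_le_mul_of_nonneg_left h (by positivity)
      calc L⁻¹ ^ 2 * ‖x‖ ^ 2 ≤ L⁻¹^2 * (ε * L^2 * ↑n) := h'
      _ = ε * ↑n := by field_simp
  -- small ball bound for approximations
  have hbound : ∀ m : ℕ,
      μ {x : EuclideanSpace ℝ (Fin n) | ‖x - 0‖ ^ 2 ≤ (ε * (1 - 1/((m:ℝ)+2))) * n} ≤
        ENNReal.ofReal (c₂ ^ n) := by
    intro m
    have hm2 : (0:ℝ) < (m:ℝ) + 2 := by positivity
    have h1 : (0:ℝ) < 1 - 1/((m:ℝ)+2) := by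
      rw [sub_pos, div_lt_one hm2]; linarith
    have h1' : 1 - 1/((m:ℝ)+2) < 1 := by
      have : (0:ℝ) < 1/((m:ℝ)+2) := by positivity
      linarith
    have hεm0 : 0 < ε * (1 - 1/((m:ℝ)+2)) := mul_pos hε h1
    have hεmε : ε * (1 - 1/((m:ℝ)+2)) < ε := mul_lt_of_lt_one_right hε h1'
    have hεmc₀ : ε * (1 - 1/((m:ℝ)+2)) < c₀ := lt_of_lt_of_le hεmε hεc₀
    have hh := hsb n hn μ hprob hLC hiso _ hεm0 hεmc₀ 0
    refine hh.trans (ENNReal.ofReal_le_ofReal ?_)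
    calc (ε * (1 - 1/((m:ℝ)+2))) ^ (c₀ * (n:ℝ))
        ≤ ε ^ (c₀ * (n:ℝ)) := Real.rpow_le_rpow hεm0.le hεmε.le (by positivity)
      _ ≤ (c₂ ^ (1/c₀)) ^ (c₀ * (n:ℝ)) := Real.rpow_le_rpow hε.le hεc₂ (by positivity)
      _ = c₂ ^ n := by
          rw [← Real.rpow_natCast c₂ n, ← Real.rpow_mul hc₂.le]
          congr 1
          field_simp
  -- monotone union
  set Em : ℕ → Set (EuclideanSpace ℝ (Fin n)) :=
    fun m => {x | ‖x - 0‖ ^ 2 ≤ (ε * (1 - 1/((m:ℝ)+2))) * n} with hEmdef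
  have hmono : Monotone Em := by
    intro a b hab x hx
    simp only [hEmdef, Set.mem_setOf_eq] at *
    refine hx.trans ?_
    have hab' : (a:ℝ) + 2 ≤ (b:ℝ) + 2 := by
      have : (a:ℝ) ≤ b := by exact_mod_cast hab
      linarith
    have h1 : 1/((b:ℝ)+2) ≤ 1/((a:ℝ)+2) :=
      one_div_le_one_div_of_le (by positivity) hab'
    have h2 : 1 - 1/((a:ℝ)+2) ≤ 1 - 1/((b:ℝ)+2) := by linarith
    have h3 : (0:ℝ) ≤ 1 - 1/((a:ℝ)+2) := by
      have : 1/((a:ℝ)+2) ≤ 1 := by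
        rw [div_le_one (by positivity)]; linarith
      linarith
    gcongr
  have hUnion : {x : EuclideanSpace ℝ (Fin n) | ‖x - 0‖ ^ 2 < ε * n} = ⋃ m, Em m := by
    ext x
    simp only [hEmdef, Set.mem_iUnion, Set.mem_setOf_eq]
    constructor
    · intro hx
      have hδ0 : 0 < ε * n - ‖x - 0‖ ^ 2 := by linarith
      set δ := ε * n - ‖x - 0‖ ^ 2 with hδdef
      obtain ⟨m, hm⟩ := exists_nat_ge (ε * n / δ)
      refine ⟨m, ?_⟩
      have hm2 : (0:ℝ) < (m:ℝ) + 2 := by positivity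
      have hεn : 0 < ε * n := mul_pos hε hn0
      have key : ε * n / ((m:ℝ)+2) ≤ δ := by
        rw [div_le_iff₀ hm2]
        calc ε * n = δ * (ε * n / δ) := by field_simp
        _ ≤ δ * ((m:ℝ)+2) := by
            refine mul_le_mul_of_nonneg_left ?_ hδ0.le
            linarith
      have heq : ε * (1 - 1/((m:ℝ)+2)) * n = ε * n - ε * n/((m:ℝ)+2) := by
        field_simp
      rw [heq]
      have : ‖x - 0‖ ^ 2 = ε * n - δ := by rw [hδdef]; ring
      linarith
    · rintro ⟨m, hm⟩
      have hm2 : (0:ℝ) < (m:ℝ) + 2 := by positivity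
      have h1 : (0:ℝ) < 1/((m:ℝ)+2) := by positivity
      have h2 : (0:ℝ) < ε * (1/((m:ℝ)+2)) * n := by positivity
      have : ε * (1 - 1/((m:ℝ)+2)) * n < ε * n := by nlinarith
      linarith
  have hopen : μ {x : EuclideanSpace ℝ (Fin n) | ‖x - 0‖ ^ 2 < ε * n} ≤
      ENNReal.ofReal (c₂ ^ n) := by
    rw [hUnion, Directed.measure_iUnion (hmono.directed_le)]
    exact iSup_le hbound
  -- sphere has measure zero
  haveI : Nontrivial (EuclideanSpace ℝ (Fin n)) := by
    refine ⟨⟨EuclideanSpace.single ⟨0, hn⟩ 1, 0, fun h => ?_⟩⟩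
    have h2 := congrArg (fun v : EuclideanSpace ℝ (Fin n) => v ⟨0, hn⟩) h
    simp [EuclideanSpace.single_apply] at h2
  have hsphere : μ {x : EuclideanSpace ℝ (Fin n) | ‖x - 0‖ ^ 2 = ε * n} = 0 := by
    have hac : μ ≪ volume := hμw ▸ withDensity_absolutelyContinuous volume _
    refine hac ?_
    refine measure_mono_null (fun x hx => ?_)
      (Measure.addHaar_sphere volume (0 : EuclideanSpace ℝ (Fin n)) (Real.sqrt (ε * n)))
    simp only [Set.mem_setOf_eq] at hx
    simp only [mem_sphere_iff_norm, sub_zero] at *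
    rw [← hx, Real.sqrt_sq (norm_nonneg x)]
  -- combine
  have hsplit : μ {x : EuclideanSpace ℝ (Fin n) | ‖x - 0‖ ^ 2 ≤ ε * n} ≤
      ENNReal.ofReal (c₂ ^ n) := by
    have hsub : {x : EuclideanSpace ℝ (Fin n) | ‖x - 0‖ ^ 2 ≤ ε * n} ⊆
        {x | ‖x - 0‖ ^ 2 < ε * n} ∪ {x | ‖x - 0‖ ^ 2 = ε * n} := by
      intro x hx
      rcases lt_or_eq_of_le (show ‖x - 0‖ ^ 2 ≤ ε * (n:ℝ) from hx) with h | h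
      · exact Or.inl h
      · exact Or.inr h
    calc μ {x : EuclideanSpace ℝ (Fin n) | ‖x - 0‖ ^ 2 ≤ ε * n}
        ≤ μ ({x | ‖x - 0‖ ^ 2 < ε * n} ∪ {x | ‖x - 0‖ ^ 2 = ε * n}) := measure_mono hsub
      _ ≤ μ {x | ‖x - 0‖ ^ 2 < ε * n} + μ {x | ‖x - 0‖ ^ 2 = ε * n} := measure_union_le _ _
      _ ≤ ENNReal.ofReal (c₂ ^ n) + 0 := add_le_add hopen (le_of_eq hsphere)
      _ = ENNReal.ofReal (c₂ ^ n) := add_zero _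
  exact absurd (hvol.trans_le (hev ▸ hsplit)) (lt_irrefl _)

end
end
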